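/- Let r, m be positive integers, let A be an r × r integer matrix with det(A) ≠ 0 and let B be an m × m integer matrix with det(B) ≠ 0, regarded as (injective) ℤ-linear maps A : ℤ^r → ℤ^r and B : ℤ^m → ℤ^m. Suppose α₁ : ℤ^r → ℤ^m and α₂ : ℤ^r → ℤ^m are injective group homomorphisms satisfying B ∘ α₁ = α₂ ∘ A, that the cokernels coker(α₁) and coker(α₂) are free abelian groups of the same finite rank, and that the homomorphism coker(α₁) → coker(α₂) induced by B is surjective. Then |det(A)| = |det(B)|. -/

import Mathlib

open Matrix

/-- The index of a full-rank submodule `N` of `ℤ^n` equals `|det|` of any linear map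
`ℤ^n → ℤ^n` whose image is `N` (expressed via a linear equiv onto `N`). -/
lemma index_eq_natAbs_det {n : ℕ} (N : Submodule ℤ (Fin n → ℤ))
    (e : (Fin n → ℤ) ≃ₗ[ℤ] N) :
    N.toAddSubgroup.index =
      (LinearMap.det (N.subtype ∘ₗ (e : (Fin n → ℤ) →ₗ[ℤ] N))).natAbs := by
  classical
  obtain ⟨n', snf⟩ := N.smithNormalForm (Pi.basisFun ℤ (Fin n))
  have hn' : n = n' := by
    have h := Module.Basis.indexEquiv snf.bN ((Pi.basisFun ℤ (Fin n)).map e)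
    simpa using (Fintype.card_congr h).symm
  subst hn'
  have hfb : Function.Bijective snf.f :=
    Finite.injective_iff_bijective.mp snf.f.injective
  let g := Equiv.ofBijective snf.f hfb
  let e' := snf.bM.equiv snf.bN g.symm
  have hdet : (LinearMap.det (N.subtype ∘ₗ (e : _ →ₗ[ℤ] N))).natAbs
      = (LinearMap.det (N.subtype ∘ₗ (e' : _ →ₗ[ℤ] N))).natAbs :=
    Int.natAbs_eq_iff_associated.mpr (LinearMap.associated_det_comp_equiv _ _ _)
  rw [hdet]
  set f' := N.subtype ∘ₗ (e' : (Fin n → ℤ) →ₗ[ℤ] N) with hf'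
  have ha : ∀ i, f' (snf.bM i) = snf.a (g.symm i) • snf.bM i := by
    intro i
    have h2 : e' (snf.bM i) = snf.bN (g.symm i) := snf.bM.equiv_apply i snf.bN g.symm
    have h3 : snf.f (g.symm i) = i := g.apply_symm_apply i
    calc f' (snf.bM i) = ((e' (snf.bM i) : N) : _) := rfl
      _ = _ := by rw [h2, snf.snf, h3]
  have hmat : LinearMap.toMatrix snf.bM snf.bM f' = Matrix.diagonal (snf.a ∘ g.symm) := by
    ext i j
    rw [LinearMap.toMatrix_apply, ha, _root_.map_smul, Module.Basis.repr_self, Finsupp.smul_single,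
      smul_eq_mul, mul_one]
    by_cases h : i = j
    · rw [h, Matrix.diagonal_apply_eq, Finsupp.single_eq_same]; rfl
    · rw [Matrix.diagonal_apply_ne _ h, Finsupp.single_eq_of_ne h]
  have hdet2 : LinearMap.det f' = ∏ i, snf.a i := by
    rw [← LinearMap.det_toMatrix snf.bM, hmat, Matrix.det_diagonal]
    exact Fintype.prod_equiv g.symm _ _ (fun i => rfl)
  rw [hdet2]
  rw [snf.toAddSubgroup_index_eq_pow_mul_prod]
  simp only [Fintype.card_fin, Nat.sub_self, pow_zero, one_mul,
    Ideal.span_singleton_toAddSubgroup_eq_zmultiples, Int.index_zmultiples]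
  exact (map_prod Int.natAbsHom _ _).symm

lemma card_coker_eq {n : ℕ} (M : Matrix (Fin n) (Fin n) ℤ) (hM : M.det ≠ 0) :
    Nat.card ((Fin n → ℤ) ⧸ M.mulVecLin.toAddMonoidHom.range) = M.det.natAbs := by
  classical
  have hinj : Function.Injective M.mulVecLin := by
    intro x y hxy
    have h : M.adjugate *ᵥ (M *ᵥ x) = M.adjugate *ᵥ (M *ᵥ y) := by
      simpa using congrArg (fun v => M.adjugate *ᵥ v) hxy
    rw [mulVec_mulVec, mulVec_mulVec, Matrix.adjugate_mul, smul_mulVec,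
      smul_mulVec, one_mulVec, one_mulVec] at h
    exact smul_right_injective _ hM h
  set N := LinearMap.range M.mulVecLin with hN
  let e : (Fin n → ℤ) ≃ₗ[ℤ] N := LinearEquiv.ofInjective M.mulVecLin hinj
  have h1 : N.subtype ∘ₗ (e : (Fin n → ℤ) →ₗ[ℤ] N) = M.mulVecLin := by
    ext x; rfl
  have h2 := index_eq_natAbs_det N e
  rw [h1] at h2
  have h3 : LinearMap.det M.mulVecLin = M.det := by
    rw [← Matrix.toLin'_apply' M, LinearMap.det_toLin']
  have h4 : N.toAddSubgroup = M.mulVecLin.toAddMonoidHom.range := by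
    ext x
    exact Iff.rfl
  have h5 : N.toAddSubgroup.index
      = Nat.card ((Fin n → ℤ) ⧸ M.mulVecLin.toAddMonoidHom.range) := by
    rw [h4]; rfl
  rw [← h5, h2, h3]

/-- Let `A` be an `r × r` integer matrix and `B` an `m × m` integer
matrix, both with nonzero determinant, regarded as (injective) `ℤ`-linear maps
`ℤ^r → ℤ^r` and `ℤ^m → ℤ^m`.  Suppose `α₁, α₂ : ℤ^r → ℤ^m` are injective group
homomorphisms with `B ∘ α₁ = α₂ ∘ A`, the cokernels of `α₁` and `α₂` are free abelian
groups of the same finite rank, and the homomorphism `coker α₁ → coker α₂` induced by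
`B` is surjective.  Then `|det A| = |det B|`. -/
theorem abs_det_eq_abs_det
    {r m : ℕ} (hr : 0 < r) (hm : 0 < m)
    (A : Matrix (Fin r) (Fin r) ℤ) (B : Matrix (Fin m) (Fin m) ℤ)
    (hA : A.det ≠ 0) (hB : B.det ≠ 0)
    (α₁ α₂ : (Fin r → ℤ) →+ (Fin m → ℤ))
    (hα₁ : Function.Injective α₁) (hα₂ : Function.Injective α₂)
    (comm : (B.mulVecLin.toAddMonoidHom).comp α₁ = α₂.comp A.mulVecLin.toAddMonoidHom)
    (hfree : ∃ k : ℕ,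
      Nonempty (((Fin m → ℤ) ⧸ α₁.range) ≃+ (Fin k → ℤ)) ∧
      Nonempty (((Fin m → ℤ) ⧸ α₂.range) ≃+ (Fin k → ℤ)))
    (hsurj : Function.Surjective
      (QuotientAddGroup.map α₁.range α₂.range B.mulVecLin.toAddMonoidHom
        (by rintro x ⟨n, rfl⟩
            exact ⟨A.mulVecLin n, (DFunLike.congr_fun comm n).symm⟩))) :
    |A.det| = |B.det| := by
  obtain ⟨k, ⟨e₁⟩, ⟨e₂⟩⟩ := hfree
  set φ := QuotientAddGroup.map α₁.range α₂.range B.mulVecLin.toAddMonoidHom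
      (by rintro x ⟨n, rfl⟩
          exact ⟨A.mulVecLin n, (DFunLike.congr_fun comm n).symm⟩) with hφ
  -- φ is injective, since it is a surjective endomorphism of ℤ^k up to isomorphism
  have hφinj : Function.Injective φ := by
    set ψ : (Fin k → ℤ) →+ (Fin k → ℤ) :=
      (e₂.toAddMonoidHom.comp φ).comp e₁.symm.toAddMonoidHom with hψ
    have hψsurj : Function.Surjective ψ :=
      e₂.surjective.comp (hsurj.comp e₁.symm.surjective)
    have hψinj : Function.Injective ψ := by
      have := OrzechProperty.injective_of_surjective_endomorphism
        (R := ℤ) (ψ.toIntLinearMap) hψsurj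
      exact this
    have : Function.Injective (⇑e₂ ∘ ⇑φ) := by
      have h : ⇑ψ ∘ ⇑e₁ = ⇑e₂ ∘ ⇑φ := by
        ext x; simp [hψ]
      rw [← h]
      exact hψinj.comp e₁.injective
    exact fun a b hab => this (by simp [Function.comp, hab])
  -- the map induced by α₂ between the cokernels of A and B
  have hle : A.mulVecLin.toAddMonoidHom.range ≤
      (B.mulVecLin.toAddMonoidHom.range).comap α₂ := by
    rintro x ⟨y, rfl⟩
    exact ⟨α₁ y, DFunLike.congr_fun comm y⟩
  set Φ := QuotientAddGroup.map A.mulVecLin.toAddMonoidHom.range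
      B.mulVecLin.toAddMonoidHom.range α₂ hle with hΦ
  have hΦinj : Function.Injective Φ := by
    rw [injective_iff_map_eq_zero]
    intro q hq
    obtain ⟨x, rfl⟩ := QuotientAddGroup.mk_surjective q
    have hx : Φ ((x : _)) = ((α₂ x : Fin m → ℤ) :
        (Fin m → ℤ) ⧸ B.mulVecLin.toAddMonoidHom.range) := rfl
    rw [hx, QuotientAddGroup.eq_zero_iff] at hq
    obtain ⟨y, hy⟩ := hq
    -- B y = α₂ x, so φ ⟦y⟧ = 0, so y ∈ range α₁
    have h0 : φ ((y : (Fin m → ℤ) ⧸ α₁.range)) = 0 := by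
      have : φ ((y : (Fin m → ℤ) ⧸ α₁.range)) =
          ((B.mulVecLin y : Fin m → ℤ) : (Fin m → ℤ) ⧸ α₂.range) := rfl
      rw [this, QuotientAddGroup.eq_zero_iff]
      exact ⟨x, hy.symm⟩
    have h1 : ((y : (Fin m → ℤ) ⧸ α₁.range)) = 0 := hφinj (by simpa using h0)
    rw [QuotientAddGroup.eq_zero_iff] at h1
    obtain ⟨z, hz⟩ := h1
    have hz2 : α₂ (A.mulVecLin z) = α₂ x := by
      have h := DFunLike.congr_fun comm z
      simp only [AddMonoidHom.comp_apply, LinearMap.toAddMonoidHom_coe] at h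
      rw [← h, hz]
      exact hy
    rw [QuotientAddGroup.eq_zero_iff]
    exact ⟨z, hα₂ hz2⟩
  have hΦsurj : Function.Surjective Φ := by
    intro q
    obtain ⟨y, rfl⟩ := QuotientAddGroup.mk_surjective q
    obtain ⟨w, hw⟩ := hsurj ((y : (Fin m → ℤ) ⧸ α₂.range))
    obtain ⟨w', rfl⟩ := QuotientAddGroup.mk_surjective w
    have hw2 : ((B.mulVecLin w' : Fin m → ℤ) : (Fin m → ℤ) ⧸ α₂.range) =
        ((y : Fin m → ℤ) : (Fin m → ℤ) ⧸ α₂.range) := hw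
    rw [QuotientAddGroup.eq] at hw2
    obtain ⟨x, hx⟩ := hw2
    refine ⟨((x : Fin r → ℤ) : (Fin r → ℤ) ⧸ A.mulVecLin.toAddMonoidHom.range), ?_⟩
    have : Φ ((x : _)) = ((α₂ x : Fin m → ℤ) :
        (Fin m → ℤ) ⧸ B.mulVecLin.toAddMonoidHom.range) := rfl
    rw [this, QuotientAddGroup.eq]
    exact ⟨w', by rw [hx]; abel⟩
  have hcard : Nat.card ((Fin r → ℤ) ⧸ A.mulVecLin.toAddMonoidHom.range)
      = Nat.card ((Fin m → ℤ) ⧸ B.mulVecLin.toAddMonoidHom.range) :=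
    Nat.card_congr (Equiv.ofBijective Φ ⟨hΦinj, hΦsurj⟩)
  rw [card_coker_eq A hA, card_coker_eq B hB] at hcard
  rw [Int.abs_eq_natAbs, Int.abs_eq_natAbs, hcard]
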